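/- Every finite connected simple graph G on n ≥ 2 vertices admits a partition of its vertex set into an independent set R and a set B = V∖R such that the bipartite subgraph consisting of all edges between R and B is connected. -/

import Mathlib

open Finset

/-- The bipartite subgraph of `G` consisting of the edges with exactly one endpoint in `R`. -/
def bipartiteBetween {V : Type*} (G : SimpleGraph V) (R : Set V) : SimpleGraph V where
  Adj a b := G.Adj a b ∧ ((a ∈ R ∧ b ∉ R) ∨ (a ∉ R ∧ b ∈ R))
  symm := by
    constructor
    intro a b h
    exact ⟨h.1.symm, h.2.elim (fun h' => Or.inr ⟨h'.2, h'.1⟩) (fun h' => Or.inl ⟨h'.2, h'.1⟩)⟩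
  loopless := by
    constructor
    intro a h
    exact h.2.elim (fun h' => h'.2 h'.1) (fun h' => h'.1 h'.2)

/-- The bipartite subgraph, further restricted to a finset `s`. -/
def HB {V : Type*} [DecidableEq V] (G : SimpleGraph V) (R : Set V) (s : Finset V) :
    SimpleGraph V where
  Adj a b := (bipartiteBetween G R).Adj a b ∧ a ∈ s ∧ b ∈ s
  symm := ⟨fun a b ⟨h, ha, hb⟩ => ⟨(bipartiteBetween G R).adj_symm h, hb, ha⟩⟩
  loopless := ⟨fun a ⟨h, _, _⟩ => (bipartiteBetween G R).irrefl h⟩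

lemma walk_boundary {V : Type*} {G : SimpleGraph V} {s : Finset V} :
    ∀ {a b : V}, G.Walk a b → a ∈ s → b ∉ s → ∃ v w, v ∉ s ∧ w ∈ s ∧ G.Adj w v := by
  intro a b p
  induction p with
  | nil => intro ha hb; exact absurd ha hb
  | @cons u x w h p ih =>
      intro ha hb
      by_cases hx : x ∈ s
      · exact ih hx hb
      · exact ⟨x, u, hx, ha, h⟩

theorem stmt12 {V : Type*} [Fintype V] [DecidableEq V] (G : SimpleGraph V)
    (hG : G.Connected) (hcard : 2 ≤ Fintype.card V) :
    ∃ R : Set V,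
      (∀ a ∈ R, ∀ b ∈ R, ¬ G.Adj a b) ∧
      (bipartiteBetween G R).Connected := by
  have hne : Nonempty V := Fintype.card_pos_iff.mp (by omega)
  obtain ⟨u⟩ := hne
  -- key induction: grow s to univ
  have key : ∀ (n : ℕ) (s : Finset V), s.Nonempty → sᶜ.card = n →
      (∃ R : Set V, (∀ a ∈ R, a ∈ s) ∧ (∀ a ∈ R, ∀ b ∈ R, ¬ G.Adj a b) ∧
        ∀ a ∈ s, ∀ b ∈ s, (HB G R s).Reachable a b) →
      ∃ R : Set V, (∀ a ∈ R, ∀ b ∈ R, ¬ G.Adj a b) ∧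
        ∀ a b : V, (bipartiteBetween G R).Reachable a b := by
    intro n
    induction n with
    | zero =>
        intro s hs hcompl ⟨R, hRs, hRind, hreach⟩
        have hsuniv : s = Finset.univ := by
          have := Finset.card_eq_zero.mp hcompl
          have : ∀ x : V, x ∈ s := by
            intro x
            by_contra hx
            have : x ∈ sᶜ := Finset.mem_compl.mpr hx
            simp_all
          exact Finset.eq_univ_iff_forall.mpr this
        subst hsuniv
        refine ⟨R, hRind, fun a b => ?_⟩
        have hle : HB G R Finset.univ ≤ bipartiteBetween G R := by
          intro a b hab
          exact hab.1
        exact (hreach a (Finset.mem_univ a) b (Finset.mem_univ b)).mono hle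
    | succ n ih =>
        intro s hs hcompl ⟨R, hRs, hRind, hreach⟩
        -- s ≠ univ, find boundary edge
        have hcne : sᶜ.Nonempty := Finset.card_pos.mp (by omega)
        obtain ⟨x, hx⟩ := hcne
        have hxs : x ∉ s := Finset.mem_compl.mp hx
        obtain ⟨a, ha⟩ := hs
        obtain ⟨p⟩ := hG.preconnected a x
        obtain ⟨v, w, hv, hw, hadj⟩ := walk_boundary p ha hxs
        have hvR : v ∉ R := fun h => hv (hRs v h)
        have hcompl' : (insert v s)ᶜ.card = n := by
          rw [Finset.compl_insert, Finset.card_erase_of_mem (Finset.mem_compl.mpr hv)]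
          omega
        by_cases hvr : ∃ r ∈ R, G.Adj v r
        · -- put v in B: keep R
          obtain ⟨r, hr, hvradj⟩ := hvr
          have hle : HB G R s ≤ HB G R (insert v s) := by
            intro a b ⟨h, ha, hb⟩
            exact ⟨h, Finset.mem_insert_of_mem ha, Finset.mem_insert_of_mem hb⟩
          have hrs : r ∈ s := hRs r hr
          have hvreach : (HB G R (insert v s)).Reachable v r :=
            SimpleGraph.Adj.reachable
              ⟨⟨hvradj, Or.inr ⟨hvR, hr⟩⟩, Finset.mem_insert_self v s,
                Finset.mem_insert_of_mem hrs⟩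
          have hreach' : ∀ a ∈ insert v s, ∀ b ∈ insert v s,
              (HB G R (insert v s)).Reachable a b := by
            intro a ha b hb
            have key1 : ∀ c ∈ insert v s, (HB G R (insert v s)).Reachable c r := by
              intro c hc
              rcases Finset.mem_insert.mp hc with rfl | hc
              · exact hvreach
              · exact (hreach c hc r hrs).mono hle
            exact (key1 a ha).trans (key1 b hb).symm
          exact ih (insert v s) ⟨v, Finset.mem_insert_self v s⟩ hcompl'
            ⟨R, fun a hR => Finset.mem_insert_of_mem (hRs a hR), hRind, hreach'⟩
        · -- put v in R
          push_neg at hvr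
          set R' : Set V := insert v R with hR'
          have hmemR' : ∀ {a : V}, a ≠ v → (a ∈ R' ↔ a ∈ R) := by
            intro a hav
            simp [hR', Set.mem_insert_iff, hav]
          have hRind' : ∀ a ∈ R', ∀ b ∈ R', ¬ G.Adj a b := by
            intro a haR b hbR
            rcases haR with rfl | haR
            · rcases hbR with rfl | hbR
              · exact G.irrefl
              · exact hvr b hbR
            · rcases hbR with rfl | hbR
              · intro h; exact hvr a haR h.symm
              · exact hRind a haR b hbR
          have hle : HB G R s ≤ HB G R' (insert v s) := by
            intro a b ⟨⟨hadj', hor⟩, ha, hb⟩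
            have hav : a ≠ v := fun h => hv (h ▸ ha)
            have hbv : b ≠ v := fun h => hv (h ▸ hb)
            refine ⟨⟨hadj', ?_⟩, Finset.mem_insert_of_mem ha, Finset.mem_insert_of_mem hb⟩
            rcases hor with ⟨h1, h2⟩ | ⟨h1, h2⟩
            · exact Or.inl ⟨(hmemR' hav).mpr h1, fun h => h2 ((hmemR' hbv).mp h)⟩
            · exact Or.inr ⟨fun h => h1 ((hmemR' hav).mp h), (hmemR' hbv).mpr h2⟩
          have hwR : w ∉ R := fun h => hvr w h hadj.symm
          have hwR' : w ∉ R' := by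
            intro h
            rcases h with rfl | h
            · exact hv hw
            · exact hwR h
          have hvR' : v ∈ R' := Set.mem_insert v R
          have hvreach : (HB G R' (insert v s)).Reachable v w :=
            SimpleGraph.Adj.reachable
              ⟨⟨hadj.symm, Or.inl ⟨hvR', hwR'⟩⟩, Finset.mem_insert_self v s,
                Finset.mem_insert_of_mem hw⟩
          have hreach' : ∀ a ∈ insert v s, ∀ b ∈ insert v s,
              (HB G R' (insert v s)).Reachable a b := by
            intro a ha b hb
            have key1 : ∀ c ∈ insert v s, (HB G R' (insert v s)).Reachable c w := by
              intro c hc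
              rcases Finset.mem_insert.mp hc with rfl | hc
              · exact hvreach
              · exact (hreach c hc w hw).mono hle
            exact (key1 a ha).trans (key1 b hb).symm
          refine ih (insert v s) ⟨v, Finset.mem_insert_self v s⟩ hcompl'
            ⟨R', ?_, hRind', hreach'⟩
          intro a haR
          rcases haR with rfl | haR
          · exact Finset.mem_insert_self a s
          · exact Finset.mem_insert_of_mem (hRs a haR)
  -- base case: s = {u}
  obtain ⟨R, hRind, hreach⟩ := key ({u} : Finset V)ᶜ.card {u} ⟨u, Finset.mem_singleton_self u⟩
    rfl ⟨∅, by simp, by simp, by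
      intro a ha b hb
      rw [Finset.mem_singleton] at ha hb
      subst ha; subst hb
      exact SimpleGraph.Reachable.refl _⟩
  haveI : Nonempty V := ⟨u⟩
  exact ⟨R, hRind, ⟨hreach⟩⟩
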